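/- Let 4 ≤ λ ≤ σ-1, with relative frequencies f^r(c_i) = f(c_i)/F_{σ+1} where f(c_0)=1, f(c_i)=F_i for 1 ≤ i ≤ σ-1, code lengths |ρ(c_0)| = σ-1, |ρ(c_i)| = σ-i, and e_ρ = (F_{σ+3}-3)/F_{σ+1} < λ. Then ∑_{i=0}^{σ-λ-1} f^r(c_i)·(|ρ(c_i)| - λ)/(λ - e_ρ) = (F_{σ-λ+3} - 3)/(λ·F_{σ+1} - F_{σ+3} + 3). -/

import Mathlib

lemma fib_weighted_sum (m : ℕ) :
    (∑ i ∈ Finset.range m, Nat.fib i * (m - i)) + m + 2 = Nat.fib (m + 3) := by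
  induction m with
  | zero => decide
  | succ n ih =>
    have h1 : ∀ i ∈ Finset.range n, Nat.fib i * (n + 1 - i) = Nat.fib i * (n - i) + Nat.fib i := by
      intro i hi
      have hin := Finset.mem_range.mp hi
      have h : n + 1 - i = (n - i) + 1 := by omega
      rw [h, Nat.mul_succ]
    rw [Finset.sum_range_succ, Finset.sum_congr rfl h1, Finset.sum_add_distrib]
    have h5 : n + 1 - n = 1 := by omega
    rw [h5, Nat.mul_one]
    have h2 := Nat.fib_succ_eq_succ_sum n
    have h3 : Nat.fib (n + 1 + 3) = Nat.fib (n + 2) + Nat.fib (n + 3) := Nat.fib_add_two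
    have h4 : Nat.fib (n + 3) = Nat.fib (n + 1) + Nat.fib (n + 2) := Nat.fib_add_two
    have h6 : Nat.fib (n + 2) = Nat.fib n + Nat.fib (n + 1) := Nat.fib_add_two
    omega

theorem fib_gamma_delay_exact (σ l : ℕ) (hl : 4 ≤ l) (hlσ : l ≤ σ - 1)
    (f : ℕ → ℕ) (hf0 : f 0 = 1) (hf : ∀ i, 1 ≤ i → i ≤ σ - 1 → f i = Nat.fib i)
    (L : ℕ → ℕ) (hL0 : L 0 = σ - 1) (hL : ∀ i, 1 ≤ i → i ≤ σ - 1 → L i = σ - i)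
    (e : ℝ) (he : e = ((Nat.fib (σ + 3) : ℝ) - 3) / Nat.fib (σ + 1))
    (hpos : ((Nat.fib (σ + 3) : ℝ) - 3) < l * Nat.fib (σ + 1)) :
    ∑ i ∈ Finset.range (σ - l), ((f i : ℝ) / Nat.fib (σ + 1)) * (((L i : ℝ) - l) / (l - e)) =
      ((Nat.fib (σ - l + 3) : ℝ) - 3) / (l * Nat.fib (σ + 1) - Nat.fib (σ + 3) + 3) := by
  obtain ⟨m, hm1, rfl⟩ : ∃ m, 1 ≤ m ∧ σ = m + l := ⟨σ - l, by omega, by omega⟩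
  have hml : m + l - l = m := by omega
  rw [hml]
  have hFpos : (0 : ℝ) < Nat.fib (m + l + 1) := by
    exact_mod_cast Nat.fib_pos.mpr (by omega)
  set F : ℝ := (Nat.fib (m + l + 1) : ℝ) with hF
  have hle : (0 : ℝ) < (l : ℝ) - e := by
    rw [he, sub_pos, div_lt_iff₀ hFpos]
    linarith [hpos]
  have hden : (l : ℝ) * F - Nat.fib (m + l + 3) + 3 = F * ((l : ℝ) - e) := by
    rw [he]; field_simp; ring
  have hterm : ∀ i ∈ Finset.range m,
      ((f i : ℝ) / F) * (((L i : ℝ) - l) / ((l : ℝ) - e)) =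
        ((Nat.fib i * (m - i) : ℕ) : ℝ) / (F * ((l : ℝ) - e)) +
          (if i = 0 then ((m - 1 : ℕ) : ℝ) / (F * ((l : ℝ) - e)) else 0) := by
    intro i hi
    have him : i < m := Finset.mem_range.mp hi
    by_cases h0 : i = 0
    · subst h0
      have hc : ((m + l - 1 : ℕ) : ℝ) - l = ((m - 1 : ℕ) : ℝ) := by
        rw [Nat.cast_sub (by omega : (1:ℕ) ≤ m + l), Nat.cast_sub (by omega : (1:ℕ) ≤ m)]
        push_cast; ring
      rw [hf0, hL0, hc, if_pos rfl]
      simp only [Nat.fib_zero, Nat.zero_mul, Nat.cast_zero, zero_div, zero_add, Nat.cast_one,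
        div_mul_div_comm, one_mul]
    · have h1 : 1 ≤ i := by omega
      have hc : ((m + l - i : ℕ) : ℝ) - l = ((m - i : ℕ) : ℝ) := by
        rw [Nat.cast_sub (by omega : i ≤ m + l), Nat.cast_sub (by omega : i ≤ m)]
        push_cast; ring
      rw [hf i h1 (by omega), hL i h1 (by omega), hc, if_neg h0, add_zero,
        div_mul_div_comm, Nat.cast_mul]
  rw [Finset.sum_congr rfl hterm, Finset.sum_add_distrib]
  rw [Finset.sum_ite_eq' (Finset.range m) 0 (fun _ => ((m - 1 : ℕ) : ℝ) / (F * ((l : ℝ) - e)))]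
  rw [if_pos (Finset.mem_range.mpr (by omega : 0 < m))]
  rw [← Finset.sum_div, ← Nat.cast_sum, ← add_div]
  have h := fib_weighted_sum m
  have h' : ((∑ i ∈ Finset.range m, Nat.fib i * (m - i) : ℕ) : ℝ) + m + 2
      = (Nat.fib (m + 3) : ℝ) := by exact_mod_cast h
  have hkey : ((∑ i ∈ Finset.range m, Nat.fib i * (m - i) : ℕ) : ℝ) + ((m - 1 : ℕ) : ℝ) =
      ((Nat.fib (m + 3) : ℝ) - 3) := by
    rw [Nat.cast_sub hm1, Nat.cast_one]
    linarith [h']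
  rw [hkey, hden]
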